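/- Let k be a natural number and let g : [0,1] → ℝ be a continuous function such that w ↦ g(w)/w is integrable on (0,1]. Then ∫_0^1 ∫_0^1 s^k · (g(s·s')/s') ds ds' = (1/(k+1)) · ( ∫_0^1 g(w)/w dw − ∫_0^1 w^k g(w) dw ). -/

import Mathlib

open MeasureTheory

/-- The reparametrization identity
`∫_0^1 ∫_0^1 s^k g(ss')/s' ds ds' = (1/(k+1)) (∫_0^1 g(w)/w dw - ∫_0^1 w^k g(w) dw)`. -/
theorem double_integral_reparametrization (k : ℕ) (g : ℝ → ℝ)
    (hg : ContinuousOn g (Set.Icc 0 1))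
    (hint : IntegrableOn (fun w => g w / w) (Set.Ioc (0:ℝ) 1)) :
    (∫ s in Set.Ioc (0:ℝ) 1, ∫ s' in Set.Ioc (0:ℝ) 1, s ^ k * (g (s * s') / s'))
      = (1 / ((k : ℝ) + 1)) *
          ((∫ w in Set.Ioc (0:ℝ) 1, g w / w)
            - ∫ w in Set.Ioc (0:ℝ) 1, w ^ k * g w) := by
  set h : ℝ → ℝ := fun w => g w / w with hh
  set μ : Measure ℝ := volume.restrict (Set.Ioc (0:ℝ) 1) with hμ
  haveI : IsFiniteMeasure μ := by
    constructor
    rw [hμ, Measure.restrict_apply MeasurableSet.univ, Set.univ_inter, Real.volume_Ioc]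
    simp
  -- Step 1: inner integral via change of variables w = s * s'
  have step1 : ∀ s ∈ Set.Ioc (0:ℝ) 1,
      (∫ s' in Set.Ioc (0:ℝ) 1, s ^ k * (g (s * s') / s'))
        = s ^ k * ∫ w in Set.Ioc (0:ℝ) s, h w := by
    intro s hs
    have hs0 : (0:ℝ) < s := hs.1
    rw [integral_const_mul]
    congr 1
    calc ∫ s' in Set.Ioc (0:ℝ) 1, g (s * s') / s'
        = ∫ s' in Set.Ioc (0:ℝ) 1, s * h (s * s') := by
          apply setIntegral_congr_fun measurableSet_Ioc
          intro x hx
          have hx0 : x ≠ 0 := ne_of_gt hx.1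
          simp only [hh]
          field_simp
      _ = s * ∫ s' in (0:ℝ)..1, h (s * s') := by
          rw [integral_const_mul, intervalIntegral.integral_of_le zero_le_one]
      _ = ∫ w in Set.Ioc (0:ℝ) s, h w := by
          rw [intervalIntegral.integral_comp_mul_left _ hs0.ne', mul_zero, mul_one,
            smul_eq_mul, ← mul_assoc, mul_inv_cancel₀ hs0.ne', one_mul,
            intervalIntegral.integral_of_le hs0.le]
  rw [setIntegral_congr_fun measurableSet_Ioc step1]
  -- Step 2: Fubini
  set Φ : ℝ → ℝ → ℝ := fun s w => (Set.Iic s).indicator h w * s ^ k with hΦ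
  have hμint : Integrable h μ := hint
  have key : ∀ s ∈ Set.Ioc (0:ℝ) 1,
      s ^ k * ∫ w in Set.Ioc (0:ℝ) s, h w = ∫ w, Φ s w ∂μ := by
    intro s hs
    rw [hΦ]
    simp only []
    rw [MeasureTheory.integral_mul_const, integral_indicator measurableSet_Iic, hμ,
      Measure.restrict_restrict measurableSet_Iic]
    have : Set.Iic s ∩ Set.Ioc (0:ℝ) 1 = Set.Ioc 0 s := by
      ext x
      simp only [Set.mem_inter_iff, Set.mem_Iic, Set.mem_Ioc]
      constructor
      · rintro ⟨h1, h2, h3⟩; exact ⟨h2, h1⟩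
      · rintro ⟨h1, h2⟩; exact ⟨h2, h1, h2.trans hs.2⟩
    rw [this, mul_comm]
  rw [setIntegral_congr_fun measurableSet_Ioc key]
  -- integrability of Φ on the product
  have hAmeas : MeasurableSet {p : ℝ × ℝ | p.2 ≤ p.1} :=
    measurableSet_le measurable_snd measurable_fst
  have hΦeq : (Function.uncurry Φ) =
      fun p : ℝ × ℝ => {q : ℝ × ℝ | q.2 ≤ q.1}.indicator (fun q => h q.2 * q.1 ^ k) p := by
    ext p
    simp only [Function.uncurry, hΦ, Set.indicator, Set.mem_Iic, Set.mem_setOf_eq]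
    by_cases hle : p.2 ≤ p.1 <;> simp [hle]
  have hsm : AEStronglyMeasurable (Function.uncurry Φ) (μ.prod μ) := by
    rw [hΦeq]
    exact ((hμint.aestronglyMeasurable.comp_snd.mul
      ((measurable_fst.pow_const k).aestronglyMeasurable)).indicator hAmeas)
  have hΦint : Integrable (Function.uncurry Φ) (μ.prod μ) := by
    have hbound : Integrable (fun p : ℝ × ℝ => h p.2) (μ.prod μ) := by
      refine (integrable_prod_iff hμint.aestronglyMeasurable.comp_snd).2 ⟨?_, ?_⟩
      · exact Filter.Eventually.of_forall fun x => hμint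
      · exact integrable_const (∫ y, ‖h y‖ ∂μ)
    refine hbound.mono hsm ?_
    have hae : ∀ᵐ p ∂(μ.prod μ), p ∈ Set.Ioc (0:ℝ) 1 ×ˢ Set.Ioc (0:ℝ) 1 := by
      rw [hμ, Measure.prod_restrict]
      exact ae_restrict_mem (measurableSet_Ioc.prod measurableSet_Ioc)
    filter_upwards [hae] with p hp
    rw [hΦeq]
    simp only [Set.indicator]
    split_ifs with hle
    · rw [Real.norm_eq_abs, Real.norm_eq_abs, abs_mul, abs_pow]
      calc |h p.2| * |p.1| ^ k ≤ |h p.2| * 1 := by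
            apply mul_le_mul_of_nonneg_left _ (abs_nonneg _)
            exact pow_le_one₀ (abs_nonneg _) (abs_le.2 ⟨by linarith [hp.1.1], hp.1.2⟩)
        _ = |h p.2| := mul_one _
    · simp [abs_nonneg]
  rw [integral_integral_swap hΦint]
  -- Step 3: compute the inner integral over s
  have step3 : ∀ w ∈ Set.Ioc (0:ℝ) 1,
      (∫ s, Φ s w ∂μ) = h w * ((1 - w ^ (k + 1)) / (k + 1)) := by
    intro w hw
    have : (fun s => Φ s w) = fun s => (Set.Ici w).indicator (fun s => h w * s ^ k) s := by
      ext s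
      simp only [hΦ, Set.indicator, Set.mem_Iic, Set.mem_Ici]
      by_cases hle : w ≤ s <;> simp [hle, mul_comm]
    rw [this, integral_indicator measurableSet_Ici, hμ,
      Measure.restrict_restrict measurableSet_Ici]
    have hset : Set.Ici w ∩ Set.Ioc (0:ℝ) 1 = Set.Icc w 1 := by
      ext x
      simp only [Set.mem_inter_iff, Set.mem_Ici, Set.mem_Ioc, Set.mem_Icc]
      exact ⟨fun ⟨h1, _, h3⟩ => ⟨h1, h3⟩, fun ⟨h1, h2⟩ => ⟨h1, hw.1.trans_le h1, h2⟩⟩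
    rw [hset, integral_const_mul, integral_Icc_eq_integral_Ioc,
      ← intervalIntegral.integral_of_le hw.2, integral_pow]
    norm_num
  rw [setIntegral_congr_fun measurableSet_Ioc step3]
  -- Step 4: final computation
  have hg_int : IntegrableOn (fun w => w ^ k * g w) (Set.Ioc (0:ℝ) 1) := by
    apply ((ContinuousOn.mul (continuous_pow k).continuousOn hg).integrableOn_compact
      isCompact_Icc).mono_set Set.Ioc_subset_Icc_self
  have step4 : ∀ w ∈ Set.Ioc (0:ℝ) 1,
      h w * ((1 - w ^ (k + 1)) / ((k:ℝ) + 1))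
        = (1 / ((k:ℝ) + 1)) * (h w - w ^ k * g w) := by
    intro w hw
    have hw0 : w ≠ 0 := ne_of_gt hw.1
    have hpow : w ^ (k + 1) * h w = w ^ k * g w := by
      simp only [hh, pow_succ]
      field_simp
    calc h w * ((1 - w ^ (k + 1)) / ((k:ℝ) + 1))
        = (1 / ((k:ℝ) + 1)) * (h w - w ^ (k + 1) * h w) := by ring
      _ = (1 / ((k:ℝ) + 1)) * (h w - w ^ k * g w) := by rw [hpow]
  rw [setIntegral_congr_fun measurableSet_Ioc step4, integral_const_mul,
    integral_sub hμint hg_int]
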